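/- Let $f : (0,\infty) \to [0,\infty)$ be nonincreasing and locally integrable, with $f^{**}(t) = \frac{1}{t}\int_0^t f(s)\,ds$. For $1 \leq q < \infty$, if $f^{**}(t) \to 0$ as $t \to \infty$, then $\left(\int_0^\infty f^{**}(t)^q\,dt\right)^{1/q} \leq q \left(\int_0^\infty [f^{**}(t) - f(t)]^q\,dt\right)^{1/q}$. -/

import Mathlib

open Set MeasureTheory Filter
open scoped ENNReal

/-- Tonelli swap over the triangle `{x < y}`. -/
lemma swap_tri (μ ν : Measure ℝ) [SigmaFinite μ] [SigmaFinite ν] (A B : ℝ → ℝ≥0∞)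
    (hA : AEMeasurable A μ) (hB : AEMeasurable B ν) :
    ∫⁻ x, A x * ∫⁻ y in Ioi x, B y ∂ν ∂μ = ∫⁻ y, B y * ∫⁻ x in Iio y, A x ∂μ ∂ν := by
  have hS : MeasurableSet {p : ℝ × ℝ | p.1 < p.2} :=
    measurableSet_lt measurable_fst measurable_snd
  set F : ℝ → ℝ → ℝ≥0∞ := fun x y =>
    ({p : ℝ × ℝ | p.1 < p.2}.indicator (fun _ => (1:ℝ≥0∞)) (x, y)) * (A x * B y) with hF
  have hFm : AEMeasurable (Function.uncurry F) (μ.prod ν) := by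
    have : Function.uncurry F = fun p : ℝ × ℝ =>
        ({p : ℝ × ℝ | p.1 < p.2}.indicator (fun _ => (1:ℝ≥0∞)) p) * (A p.1 * B p.2) := by
      ext p; cases p; rfl
    rw [this]
    exact ((measurable_one.indicator hS).aemeasurable).mul (hA.comp_fst.mul hB.comp_snd)
  have L : ∀ x, A x * ∫⁻ y in Ioi x, B y ∂ν = ∫⁻ y, F x y ∂ν := by
    intro x
    rw [← lintegral_const_mul'' (A x) hB.restrict, ← lintegral_indicator measurableSet_Ioi]
    congr 1 with y
    by_cases h : x < y
    · simp [hF, Set.indicator_apply, h, mem_Ioi]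
    · simp [hF, Set.indicator_apply, h, mem_Ioi]
  have R : ∀ y, B y * ∫⁻ x in Iio y, A x ∂μ = ∫⁻ x, F x y ∂μ := by
    intro y
    rw [← lintegral_const_mul'' (B y) hA.restrict, ← lintegral_indicator measurableSet_Iio]
    congr 1 with x
    by_cases h : x < y
    · simp [hF, Set.indicator_apply, h, mem_Iio, mul_comm]
    · simp [hF, Set.indicator_apply, h, mem_Iio]
  simp_rw [L, R]
  exact lintegral_lintegral_swap hFm

lemma lint_Ioi_rpow {c t : ℝ} (hc : c < -1) (ht : 0 < t) :
    ∫⁻ s in Ioi t, ENNReal.ofReal (s ^ c) = ENNReal.ofReal (-t ^ (c + 1) / (c + 1)) := by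
  rw [← integral_Ioi_rpow_of_lt hc ht]
  rw [ofReal_integral_eq_lintegral_ofReal (integrableOn_Ioi_rpow_of_lt hc ht)]
  filter_upwards [ae_restrict_mem measurableSet_Ioi] with s hs
  exact Real.rpow_nonneg (le_of_lt (ht.trans hs)) c

lemma lint_Ioo_rpow {β s : ℝ} (hβ : -1 < β) (hs : 0 < s) :
    ∫⁻ t in Ioo 0 s, ENNReal.ofReal (t ^ β) = ENNReal.ofReal (s ^ (β + 1) / (β + 1)) := by
  have hint : IntegrableOn (fun t : ℝ => t ^ β) (Ioo 0 s) := by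
    have h := (intervalIntegral.intervalIntegrable_rpow' (r := β) hβ (a := 0) (b := s)).1
    exact h.mono_set Ioo_subset_Ioc_self
  rw [← ofReal_integral_eq_lintegral_ofReal hint ?nn]
  case nn =>
    filter_upwards [ae_restrict_mem measurableSet_Ioo] with t htm
    exact Real.rpow_nonneg htm.1.le β
  have : ∫ t in Ioo (0:ℝ) s, t ^ β = ∫ t in (0:ℝ)..s, t ^ β := by
    rw [intervalIntegral.integral_of_le hs.le, integral_Ioc_eq_integral_Ioo]
  rw [this, integral_rpow (Or.inl hβ), Real.zero_rpow (by linarith), sub_zero]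

lemma lint_Ioc_neg2 {b T : ℝ} (hb : 0 < b) (hbT : b ≤ T) :
    ∫⁻ s in Ioc b T, ENNReal.ofReal (s ^ (-2 : ℝ)) = ENNReal.ofReal (1/b - 1/T) := by
  have h0 : (0:ℝ) ∉ Set.uIcc b T := by
    rw [Set.mem_uIcc]; push_neg
    constructor
    · intro h; linarith
    · intro h; linarith [hb.trans_le hbT]
  have hint : IntegrableOn (fun s : ℝ => s ^ (-2 : ℝ)) (Ioc b T) := by
    have h := (intervalIntegral.intervalIntegrable_rpow (μ := volume) (r := (-2:ℝ)) (a := b) (b := T)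
      (Or.inr h0)).1
    simpa [hbT] using h
  rw [← ofReal_integral_eq_lintegral_ofReal hint ?nn]
  case nn =>
    filter_upwards [ae_restrict_mem measurableSet_Ioc] with s hsm
    exact Real.rpow_nonneg (hb.trans hsm.1).le _
  have : ∫ s in Ioc b T, s ^ (-2:ℝ) = ∫ s in b..T, s ^ (-2:ℝ) := by
    rw [intervalIntegral.integral_of_le hbT]
  rw [this, integral_rpow (Or.inr ⟨by norm_num, h0⟩)]
  norm_num
  rw [Real.rpow_neg_one, Real.rpow_neg_one]
  congr 1
  have hT : (0:ℝ) < T := hb.trans_le hbT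
  field_simp
  ring
lemma hardy (G : ℝ → ℝ≥0∞) (hG : AEMeasurable G (volume.restrict (Ioi 0))) {q : ℝ}
    (hq : 1 ≤ q) :
    ∫⁻ t in Ioi (0:ℝ), (∫⁻ s in Ioi t, G s * ENNReal.ofReal (1/s)) ^ q
      ≤ ENNReal.ofReal q ^ q * ∫⁻ s in Ioi (0:ℝ), G s ^ q := by
  have hq0 : 0 < q := lt_of_lt_of_le one_pos hq
  have hmeas_inv : Measurable fun s : ℝ => ENNReal.ofReal (1/s) :=
    (measurable_const.div measurable_id).ennreal_ofReal
  rcases eq_or_lt_of_le hq with hq1 | hq1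
  · -- q = 1
    subst hq1
    simp only [ENNReal.rpow_one, ENNReal.ofReal_one, one_mul]
    have hB : AEMeasurable (fun s => G s * ENNReal.ofReal (1/s)) (volume.restrict (Ioi 0)) :=
      hG.mul hmeas_inv.aemeasurable
    have hswap := swap_tri (volume.restrict (Ioi 0)) (volume.restrict (Ioi 0))
      (fun _ => 1) (fun s => G s * ENNReal.ofReal (1/s)) aemeasurable_const hB
    simp only [one_mul] at hswap
    calc ∫⁻ t in Ioi (0:ℝ), ∫⁻ s in Ioi t, G s * ENNReal.ofReal (1/s)
        = ∫⁻ t in Ioi (0:ℝ), ∫⁻ s in Ioi t, G s * ENNReal.ofReal (1/s)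
            ∂(volume.restrict (Ioi 0)) := by
          refine lintegral_congr_ae ?_
          filter_upwards [ae_restrict_mem measurableSet_Ioi] with t ht
          rw [Measure.restrict_restrict measurableSet_Ioi,
            inter_eq_left.2 (Ioi_subset_Ioi ht.le)]
      _ = ∫⁻ s in Ioi (0:ℝ), (G s * ENNReal.ofReal (1/s)) *
            ∫⁻ _ in Iio s, 1 ∂(volume.restrict (Ioi 0)) := hswap
      _ ≤ ∫⁻ s in Ioi (0:ℝ), G s := by
          refine lintegral_mono_ae ?_
          filter_upwards [ae_restrict_mem measurableSet_Ioi] with s hs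
          rw [Measure.restrict_restrict measurableSet_Iio, Set.Iio_inter_Ioi,
            lintegral_one, Measure.restrict_apply MeasurableSet.univ, univ_inter,
            Real.volume_Ioo, sub_zero, mul_assoc]
          have hs0 : (0:ℝ) < s := hs
          calc G s * (ENNReal.ofReal (1/s) * ENNReal.ofReal s)
              = G s * ENNReal.ofReal ((1/s) * s) := by
                rw [ENNReal.ofReal_mul (one_div_nonneg.mpr hs0.le)]
            _ ≤ G s := by
                rw [one_div, inv_mul_cancel₀ hs0.ne', ENNReal.ofReal_one, mul_one]
  · -- 1 < q
    set q' : ℝ := q / (q - 1) with hq'def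
    have hqm1 : 0 < q - 1 := by linarith
    have hconj : q.HolderConjugate q' := Real.HolderConjugate.conjExponent hq1
    set a : ℝ := -1 / q ^ 2 with ha
    set b : ℝ := -1 - a with hb
    have hab : a + b = -1 := by rw [hb]; ring
    have hc : b * q' = -(q + 1) / q := by
      rw [hb, ha, hq'def]; field_simp; ring
    have hb1 : b * q' < -1 := by
      rw [hc, div_lt_iff₀ hq0]; nlinarith
    have haq : a * q = -1 / q := by rw [ha]; field_simp
    set A : ℝ → ℝ≥0∞ := fun t => ENNReal.ofReal (q ^ (q - 1) * t ^ (1/q - 1)) with hA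
    set B : ℝ → ℝ≥0∞ := fun s => G s ^ q * ENNReal.ofReal (s ^ (-1/q)) with hB'
    have hAm : Measurable A := ((measurable_id'.pow_const (1/q - 1)).const_mul _).ennreal_ofReal
    have hBm : AEMeasurable B (volume.restrict (Ioi 0)) :=
      (hG.pow_const q).mul ((measurable_id'.pow_const (-1/q)).ennreal_ofReal).aemeasurable
    -- pointwise Hölder bound
    have point : ∀ t : ℝ, 0 < t →
        (∫⁻ s in Ioi t, G s * ENNReal.ofReal (1/s)) ^ q
          ≤ A t * ∫⁻ s in Ioi t, B s := by
      intro t ht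
      have hGt : AEMeasurable G (volume.restrict (Ioi t)) :=
        hG.mono_measure (Measure.restrict_mono (Ioi_subset_Ioi ht.le) le_rfl)
      have hsplit : ∫⁻ s in Ioi t, G s * ENNReal.ofReal (1/s)
          = ∫⁻ s in Ioi t, (fun s => G s * ENNReal.ofReal (s ^ a)) s *
              (fun s => ENNReal.ofReal (s ^ b)) s := by
        refine lintegral_congr_ae ?_
        filter_upwards [ae_restrict_mem measurableSet_Ioi] with s hs
        have hs0 : (0:ℝ) < s := ht.trans hs
        show G s * ENNReal.ofReal (1/s) = G s * ENNReal.ofReal (s ^ a) * ENNReal.ofReal (s ^ b)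
        rw [mul_assoc, ← ENNReal.ofReal_mul (Real.rpow_nonneg hs0.le a),
          ← Real.rpow_add hs0, hab, Real.rpow_neg_one, one_div]
      have holder := ENNReal.lintegral_mul_le_Lp_mul_Lq (volume.restrict (Ioi t)) hconj
        (hGt.mul ((measurable_id'.pow_const a).ennreal_ofReal).aemeasurable)
        (((measurable_id'.pow_const b).ennreal_ofReal).aemeasurable)
      have hX : ∫⁻ s in Ioi t, ((fun s => G s * ENNReal.ofReal (s ^ a)) s) ^ q
          = ∫⁻ s in Ioi t, B s := by
        refine lintegral_congr_ae ?_
        filter_upwards [ae_restrict_mem measurableSet_Ioi] with s hs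
        have hs0 : (0:ℝ) < s := ht.trans hs
        show (G s * ENNReal.ofReal (s ^ a)) ^ q = G s ^ q * ENNReal.ofReal (s ^ (-1/q))
        rw [ENNReal.mul_rpow_of_nonneg _ _ hq0.le,
          ENNReal.ofReal_rpow_of_pos (Real.rpow_pos_of_pos hs0 a),
          ← Real.rpow_mul hs0.le, haq]
      have hY : ∫⁻ s in Ioi t, ((fun s => ENNReal.ofReal (s ^ b)) s) ^ q'
          = ENNReal.ofReal (q * t ^ (-1/q)) := by
        have h1 : ∫⁻ s in Ioi t, ((fun s => ENNReal.ofReal (s ^ b)) s) ^ q'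
            = ∫⁻ s in Ioi t, ENNReal.ofReal (s ^ (b * q')) := by
          refine lintegral_congr_ae ?_
          filter_upwards [ae_restrict_mem measurableSet_Ioi] with s hs
          have hs0 : (0:ℝ) < s := ht.trans hs
          show ENNReal.ofReal (s ^ b) ^ q' = ENNReal.ofReal (s ^ (b * q'))
          rw [ENNReal.ofReal_rpow_of_pos (Real.rpow_pos_of_pos hs0 b),
            ← Real.rpow_mul hs0.le]
        rw [h1, lint_Ioi_rpow hb1 ht]
        congr 1
        have h2 : b * q' + 1 = -1/q := by rw [hc]; field_simp; ring
        rw [h2]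
        have : -t ^ (-1/q) / (-1/q) = t ^ (-1/q) * q := by
          field_simp
        rw [this, mul_comm]
      calc (∫⁻ s in Ioi t, G s * ENNReal.ofReal (1/s)) ^ q
          ≤ ((∫⁻ s in Ioi t, ((fun s => G s * ENNReal.ofReal (s ^ a)) s) ^ q) ^ (1/q) *
              (∫⁻ s in Ioi t, ((fun s => ENNReal.ofReal (s ^ b)) s) ^ q') ^ (1/q')) ^ q := by
            rw [hsplit]
            exact ENNReal.rpow_le_rpow holder hq0.le
        _ = (∫⁻ s in Ioi t, B s) * (ENNReal.ofReal (q * t ^ (-1/q))) ^ (q - 1) := by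
            rw [hX, hY, ENNReal.mul_rpow_of_nonneg _ _ hq0.le,
              ← ENNReal.rpow_mul, ← ENNReal.rpow_mul,
              one_div_mul_cancel hq0.ne', ENNReal.rpow_one]
            congr 2
            rw [hq'def]
            field_simp
        _ = A t * ∫⁻ s in Ioi t, B s := by
            rw [mul_comm]
            congr 1
            show ENNReal.ofReal (q * t ^ (-1/q)) ^ (q - 1)
                = ENNReal.ofReal (q ^ (q - 1) * t ^ (1/q - 1))
            have hpos : 0 < q * t ^ (-1/q) :=
              mul_pos hq0 (Real.rpow_pos_of_pos ht _)
            rw [ENNReal.ofReal_rpow_of_pos hpos]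
            congr 1
            rw [Real.mul_rpow hq0.le (Real.rpow_nonneg ht.le _),
              ← Real.rpow_mul ht.le]
            congr 2
            field_simp
            ring
    -- integrate and swap
    have hswap := swap_tri (volume.restrict (Ioi 0)) (volume.restrict (Ioi 0)) A B
      hAm.aemeasurable hBm
    calc ∫⁻ t in Ioi (0:ℝ), (∫⁻ s in Ioi t, G s * ENNReal.ofReal (1/s)) ^ q
        ≤ ∫⁻ t in Ioi (0:ℝ), A t * ∫⁻ s in Ioi t, B s := by
          refine lintegral_mono_ae ?_
          filter_upwards [ae_restrict_mem measurableSet_Ioi] with t ht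
          exact point t ht
      _ = ∫⁻ t in Ioi (0:ℝ), A t * ∫⁻ s in Ioi t, B s ∂(volume.restrict (Ioi 0)) := by
          refine lintegral_congr_ae ?_
          filter_upwards [ae_restrict_mem measurableSet_Ioi] with t ht
          rw [Measure.restrict_restrict measurableSet_Ioi,
            inter_eq_left.2 (Ioi_subset_Ioi ht.le)]
      _ = ∫⁻ s in Ioi (0:ℝ), B s * ∫⁻ t in Iio s, A t ∂(volume.restrict (Ioi 0)) := hswap
      _ = ∫⁻ s in Ioi (0:ℝ), ENNReal.ofReal q ^ q * G s ^ q := by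
          refine lintegral_congr_ae ?_
          filter_upwards [ae_restrict_mem measurableSet_Ioi] with s hs
          rw [Measure.restrict_restrict measurableSet_Iio, Set.Iio_inter_Ioi]
          have hβ : (-1:ℝ) < 1/q - 1 := by
            have : 0 < 1/q := by positivity
            linarith
          have hinner : ∫⁻ t in Ioo (0:ℝ) s, A t
              = ENNReal.ofReal (q ^ (q-1)) * ENNReal.ofReal (s ^ (1/q - 1 + 1) / (1/q - 1 + 1)) := by
            have : ∫⁻ t in Ioo (0:ℝ) s, A t
                = ∫⁻ t in Ioo (0:ℝ) s, ENNReal.ofReal (q ^ (q-1)) * ENNReal.ofReal (t ^ (1/q - 1)) := by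
              refine lintegral_congr_ae ?_
              filter_upwards [ae_restrict_mem measurableSet_Ioo] with t htm
              show ENNReal.ofReal (q ^ (q - 1) * t ^ (1/q - 1))
                  = ENNReal.ofReal (q ^ (q-1)) * ENNReal.ofReal (t ^ (1/q - 1))
              rw [ENNReal.ofReal_mul (Real.rpow_nonneg hq0.le _)]
            rw [this, lintegral_const_mul'' _
              ((measurable_id'.pow_const (1/q-1)).ennreal_ofReal).aemeasurable,
              lint_Ioo_rpow hβ hs]
          have hs0 : (0:ℝ) < s := hs
          have h1 : 1/q - 1 + 1 = 1/q := by ring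
          have h2 : s ^ (-1/q) * s ^ (1/q) = 1 := by
            have he : -1/q + 1/q = 0 := by ring
            rw [← Real.rpow_add hs0, he, Real.rpow_zero]
          have h3 : q ^ (q-1) * q = q ^ q := by
            rw [← Real.rpow_add_one hq0.ne']; norm_num
          have h4 : s ^ (1/q) / (1/q) = s ^ (1/q) * q := by
            rw [div_eq_iff (by positivity : (1:ℝ)/q ≠ 0)]
            field_simp
          have hval : s ^ (-1/q) * (q ^ (q-1) * (s ^ (1/q - 1 + 1) / (1/q - 1 + 1))) = q ^ q := by
            rw [h1, h4]
            calc s ^ (-1/q) * (q ^ (q-1) * (s ^ (1/q) * q))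
                = (q ^ (q-1) * q) * (s ^ (-1/q) * s ^ (1/q)) := by ring
              _ = q ^ q := by rw [h2, h3, mul_one]
          rw [hinner]
          show G s ^ q * ENNReal.ofReal (s ^ (-1/q)) *
              (ENNReal.ofReal (q ^ (q-1)) * ENNReal.ofReal (s ^ (1/q - 1 + 1) / (1/q - 1 + 1)))
              = ENNReal.ofReal q ^ q * G s ^ q
          rw [ENNReal.ofReal_rpow_of_pos hq0, mul_assoc,
            ← ENNReal.ofReal_mul (Real.rpow_nonneg hq0.le _),
            ← ENNReal.ofReal_mul (Real.rpow_nonneg hs0.le _), hval, mul_comm]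
      _ = ENNReal.ofReal q ^ q * ∫⁻ s in Ioi (0:ℝ), G s ^ q :=
          lintegral_const_mul'' _ (hG.pow_const q)
lemma rep (f : ℝ → ℝ)
    (hf0 : ∀ t, 0 < t → 0 ≤ f t) (hmono : AntitoneOn f (Ioi 0))
    (hloc : ∀ t, 0 < t → IntegrableOn f (Ioc 0 t))
    (hlim : Tendsto (fun t => (1/t) * ∫ s in Ioc (0:ℝ) t, f s) atTop (nhds 0))
    (hfae : AEMeasurable f (volume.restrict (Ioi 0)))
    {t : ℝ} (ht : 0 < t) :
    ENNReal.ofReal ((1/t) * ∫ s in Ioc (0:ℝ) t, f s)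
      ≤ ∫⁻ s in Ioi t, ENNReal.ofReal ((1/s) * (∫ u in Ioc (0:ℝ) s, f u) - f s) *
          ENNReal.ofReal (1/s) := by
  set F : ℝ → ℝ := fun r => ∫ u in Ioc (0:ℝ) r, f u with hF
  set K : ℝ≥0∞ := ∫⁻ s in Ioi t, ENNReal.ofReal ((1/s) * F s - f s) * ENNReal.ofReal (1/s)
    with hK
  have hfnn : ∀ r, 0 < r → (0:ℝ→ℝ) ≤ᵐ[volume.restrict (Ioc (0:ℝ) r)] f := by
    intro r _
    filter_upwards [ae_restrict_mem measurableSet_Ioc] with u hu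
    exact hf0 u hu.1
  have hFnn : ∀ r, 0 < r → 0 ≤ F r := fun r hr =>
    setIntegral_nonneg measurableSet_Ioc (fun u hu => hf0 u hu.1)
  have hgnn : ∀ s, 0 < s → 0 ≤ (1/s) * F s - f s := by
    intro s hs
    have h1 : s * f s ≤ F s := by
      have h := setIntegral_mono_on (integrableOn_const measure_Ioc_lt_top.ne)
        (hloc s hs) measurableSet_Ioc
        (fun u hu => hmono hu.1 hs hu.2)
      rw [setIntegral_const, Real.volume_real_Ioc_of_le hs.le, sub_zero,
        smul_eq_mul] at h
      exact h
    have h2 : f s ≤ (1/s) * F s := by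
      rw [one_div, ← div_eq_inv_mul, le_div_iff₀ hs]
      linarith
    linarith
  -- the claim for finite upper limits
  have main : ∀ T : ℝ, t < T →
      ENNReal.ofReal ((1/t) * F t) ≤ K + ENNReal.ofReal ((1/T) * F T) := by
    intro T hT
    have hT0 : (0:ℝ) < T := ht.trans hT
    have hfT : IntegrableOn f (Ioc 0 T) := hloc T hT0
    have hfae' : AEMeasurable f (volume.restrict (Ioc 0 T)) :=
      hfae.mono_measure (Measure.restrict_mono Ioc_subset_Ioi_self le_rfl)
    have hfaet : AEMeasurable f (volume.restrict (Ioc 0 t)) :=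
      hfae.mono_measure (Measure.restrict_mono Ioc_subset_Ioi_self le_rfl)
    set J : ℝ≥0∞ := ∫⁻ u in Ioc t T, ENNReal.ofReal (f u) * ENNReal.ofReal (1/u) with hJ
    set Y : ℝ≥0∞ := ∫⁻ u in Ioc 0 T, ENNReal.ofReal (f u) * ENNReal.ofReal (1/T) with hY
    set Kt : ℝ≥0∞ := ∫⁻ s in Ioc t T, ENNReal.ofReal ((1/s) * F s - f s) * ENNReal.ofReal (1/s)
      with hKt
    set E : ℝ≥0∞ := ∫⁻ s in Ioc t T, ENNReal.ofReal (s ^ (-2:ℝ)) * ENNReal.ofReal (F s)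
      with hE
    have hfin : ∫⁻ u in Ioc 0 T, ENNReal.ofReal (f u) < ⊤ := by
      have hle : ∀ u : ℝ, ENNReal.ofReal (f u) ≤ ‖f u‖ₑ := by
        intro u
        rw [← ofReal_norm]
        exact ENNReal.ofReal_le_ofReal (le_abs_self _)
      exact lt_of_le_of_lt (lintegral_mono hle) hfT.2
    have hJfin : J ≠ ⊤ := by
      have hb : J ≤ ENNReal.ofReal (1/t) * ∫⁻ u in Ioc 0 T, ENNReal.ofReal (f u) := by
        rw [← lintegral_const_mul'' _ hfae'.ennreal_ofReal]
        refine le_trans (lintegral_mono_ae ?_) (lintegral_mono_set (Ioc_subset_Ioc_left ht.le))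
        filter_upwards [ae_restrict_mem measurableSet_Ioc] with u hu
        rw [mul_comm]
        exact mul_le_mul_left
          (ENNReal.ofReal_le_ofReal (one_div_le_one_div_of_le ht hu.1.le)) _
      exact (lt_of_le_of_lt hb (ENNReal.mul_lt_top ENNReal.ofReal_lt_top hfin)).ne
    have hYfin : Y ≠ ⊤ := by
      have hb : Y ≤ ENNReal.ofReal (1/T) * ∫⁻ u in Ioc 0 T, ENNReal.ofReal (f u) := by
        rw [← lintegral_const_mul'' _ hfae'.ennreal_ofReal]
        exact lintegral_mono (fun u => le_of_eq (mul_comm _ _))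
      exact (lt_of_le_of_lt hb (ENNReal.mul_lt_top ENNReal.ofReal_lt_top hfin)).ne
    have hYval : Y = ENNReal.ofReal ((1/T) * F T) := by
      calc Y = ∫⁻ u in Ioc 0 T, ENNReal.ofReal (1/T) * ENNReal.ofReal (f u) := by
            exact lintegral_congr fun u => mul_comm _ _
        _ = ENNReal.ofReal (1/T) * ∫⁻ u in Ioc 0 T, ENNReal.ofReal (f u) :=
            lintegral_const_mul'' _ hfae'.ennreal_ofReal
        _ = ENNReal.ofReal (1/T) * ENNReal.ofReal (F T) := by
            rw [← ofReal_integral_eq_lintegral_ofReal hfT (hfnn T hT0)]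
        _ = ENNReal.ofReal ((1/T) * F T) := by
            rw [← ENNReal.ofReal_mul (one_div_nonneg.mpr hT0.le)]
    -- upper form of E
    have hE_upper : E = Kt + J := by
      have hcong : E = ∫⁻ s in Ioc t T,
          (ENNReal.ofReal ((1/s) * F s - f s) * ENNReal.ofReal (1/s)
            + ENNReal.ofReal (f s) * ENNReal.ofReal (1/s)) := by
        refine lintegral_congr_ae ?_
        filter_upwards [ae_restrict_mem measurableSet_Ioc] with s hs
        have hs0 : (0:ℝ) < s := ht.trans hs.1
        have hs2 : s ^ (-2:ℝ) = (1/s) * (1/s) := by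
          rw [show (-2:ℝ) = (-1) + (-1) by norm_num, Real.rpow_add hs0, Real.rpow_neg_one]
          simp [one_div]
        have hid : s ^ (-2:ℝ) * F s = ((1/s) * F s - f s) * (1/s) + f s * (1/s) := by
          rw [hs2]; ring
        rw [← ENNReal.ofReal_mul (Real.rpow_nonneg hs0.le _), hid,
          ENNReal.ofReal_add (mul_nonneg (hgnn s hs0) (one_div_nonneg.mpr hs0.le))
            (mul_nonneg (hf0 s hs0) (one_div_nonneg.mpr hs0.le)),
          ENNReal.ofReal_mul (hgnn s hs0), ENNReal.ofReal_mul (hf0 s hs0)]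
      rw [hcong, lintegral_add_right']
      have hfaeJ : AEMeasurable f (volume.restrict (Ioc t T)) :=
        hfae.mono_measure (Measure.restrict_mono (fun x hx => lt_trans ht hx.1) le_rfl)
      exact hfaeJ.ennreal_ofReal.mul
        ((measurable_const.div measurable_id).ennreal_ofReal).aemeasurable
    -- lower form of E via Tonelli
    have hE_swap : E = ∫⁻ u in Ioc 0 T,
        ENNReal.ofReal (f u) * ENNReal.ofReal (1/(max t u) - 1/T) := by
      have h1 : E = ∫⁻ s in Ioc t T, ENNReal.ofReal (s ^ (-2:ℝ)) *
          ∫⁻ u in Iio s, ENNReal.ofReal (f u) ∂(volume.restrict (Ioc 0 T)) := by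
        refine lintegral_congr_ae ?_
        filter_upwards [ae_restrict_mem measurableSet_Ioc] with s hs
        have hs0 : (0:ℝ) < s := ht.trans hs.1
        congr 1
        rw [Measure.restrict_restrict measurableSet_Iio]
        have hset : Iio s ∩ Ioc 0 T = Ioo 0 s := by
          ext x
          simp only [mem_inter_iff, mem_Iio, mem_Ioc, mem_Ioo]
          constructor
          · rintro ⟨h1, h2, _⟩; exact ⟨h2, h1⟩
          · rintro ⟨h1, h2⟩; exact ⟨h2, h1, le_trans h2.le hs.2⟩
        rw [hset, setLIntegral_congr Ioo_ae_eq_Ioc,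
          ← ofReal_integral_eq_lintegral_ofReal (hloc s hs0) (hfnn s hs0)]
      have h2 := swap_tri (volume.restrict (Ioc 0 T)) (volume.restrict (Ioc t T))
        (fun u => ENNReal.ofReal (f u)) (fun s => ENNReal.ofReal (s ^ (-2:ℝ)))
        hfae'.ennreal_ofReal ((measurable_id'.pow_const _).ennreal_ofReal).aemeasurable
      rw [h1, ← h2]
      refine lintegral_congr_ae ?_
      filter_upwards [ae_restrict_mem measurableSet_Ioc] with u hu
      congr 1
      rw [Measure.restrict_restrict measurableSet_Ioi]
      have hset : Ioi u ∩ Ioc t T = Ioc (max t u) T := by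
        ext x
        simp only [mem_inter_iff, mem_Ioi, mem_Ioc, max_lt_iff]
        tauto
      rw [hset]
      exact lint_Ioc_neg2 (lt_max_of_lt_left ht) (max_le hT.le hu.2)
    -- the split of the harmonic-weight integral
    have hX : ∫⁻ u in Ioc 0 T, ENNReal.ofReal (f u) * ENNReal.ofReal (1/(max t u))
        = ENNReal.ofReal ((1/t) * F t) + J := by
      rw [← Ioc_union_Ioc_eq_Ioc ht.le hT.le,
        lintegral_union measurableSet_Ioc (Ioc_disjoint_Ioc_of_le le_rfl)]
      congr 1
      · calc ∫⁻ u in Ioc 0 t, ENNReal.ofReal (f u) * ENNReal.ofReal (1/(max t u))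
            = ∫⁻ u in Ioc 0 t, ENNReal.ofReal (1/t) * ENNReal.ofReal (f u) := by
              refine lintegral_congr_ae ?_
              filter_upwards [ae_restrict_mem measurableSet_Ioc] with u hu
              rw [max_eq_left hu.2, mul_comm]
          _ = ENNReal.ofReal (1/t) * ENNReal.ofReal (F t) := by
              rw [lintegral_const_mul'' _ hfaet.ennreal_ofReal,
                ← ofReal_integral_eq_lintegral_ofReal (hloc t ht) (hfnn t ht)]
          _ = ENNReal.ofReal ((1/t) * F t) := by
              rw [← ENNReal.ofReal_mul (one_div_nonneg.mpr ht.le)]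
      · refine lintegral_congr_ae ?_
        filter_upwards [ae_restrict_mem measurableSet_Ioc] with u hu
        rw [max_eq_right hu.1.le]
    -- pointwise splitting of the weight
    have hXle : ∫⁻ u in Ioc 0 T, ENNReal.ofReal (f u) * ENNReal.ofReal (1/(max t u))
        ≤ E + Y := by
      rw [hE_swap]
      have hsplit : ∫⁻ u in Ioc 0 T, ENNReal.ofReal (f u) * ENNReal.ofReal (1/(max t u))
          = ∫⁻ u in Ioc 0 T, (ENNReal.ofReal (f u) * ENNReal.ofReal (1/(max t u) - 1/T)
              + ENNReal.ofReal (f u) * ENNReal.ofReal (1/T)) := by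
        refine lintegral_congr_ae ?_
        filter_upwards [ae_restrict_mem measurableSet_Ioc] with u hu
        have hmax0 : (0:ℝ) < max t u := lt_max_of_lt_left ht
        have hmaxT : max t u ≤ T := max_le hT.le hu.2
        have h1T : 1/T ≤ 1/(max t u) := one_div_le_one_div_of_le hmax0 hmaxT
        rw [← mul_add, ← ENNReal.ofReal_add (sub_nonneg.2 h1T) (one_div_nonneg.mpr hT0.le),
          sub_add_cancel]
      rw [hsplit, lintegral_add_right']
      exact hfae'.ennreal_ofReal.mul aemeasurable_const
    -- put everything together
    have hchain : ENNReal.ofReal ((1/t) * F t) + J ≤ (Kt + Y) + J := by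
      calc ENNReal.ofReal ((1/t) * F t) + J
          = ∫⁻ u in Ioc 0 T, ENNReal.ofReal (f u) * ENNReal.ofReal (1/(max t u)) := hX.symm
        _ ≤ E + Y := hXle
        _ = (Kt + Y) + J := by rw [hE_upper]; ring
    have hfinal : ENNReal.ofReal ((1/t) * F t) ≤ Kt + Y :=
      (ENNReal.add_le_add_iff_right hJfin).mp hchain
    refine le_trans hfinal (add_le_add ?_ hYval.le)
    exact lintegral_mono_set Ioc_subset_Ioi_self
  -- pass to the limit
  have htend : Tendsto (fun T : ℝ => K + ENNReal.ofReal ((1/T) * F T)) atTop (nhds (K + 0)) := by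
    refine Tendsto.add tendsto_const_nhds ?_
    have := ENNReal.tendsto_ofReal hlim
    simpa using this
  rw [add_zero] at htend
  exact ge_of_tendsto htend (by filter_upwards [eventually_gt_atTop t] with T hT using main T hT)
/-- If `f ≥ 0` is nonincreasing, locally integrable and `f^{**}(t) → 0` as
`t → ∞`, then `(∫_0^∞ (f^{**})^q)^{1/q} ≤ q (∫_0^∞ (f^{**}-f)^q)^{1/q}`. -/
theorem stmt8 (f : ℝ → ℝ) (q : ℝ) (hq : 1 ≤ q)
    (hf0 : ∀ t, 0 < t → 0 ≤ f t) (hmono : AntitoneOn f (Ioi 0))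
    (hloc : ∀ t, 0 < t → IntegrableOn f (Ioc 0 t))
    (hlim : Tendsto (fun t => (1/t) * ∫ s in Ioc (0:ℝ) t, f s) atTop (nhds 0)) :
    (∫⁻ t in Ioi (0:ℝ),
        ENNReal.ofReal ((1/t) * ∫ s in Ioc (0:ℝ) t, f s) ^ q) ^ (1/q)
      ≤ ENNReal.ofReal q *
        (∫⁻ t in Ioi (0:ℝ),
          ENNReal.ofReal ((1/t) * (∫ s in Ioc (0:ℝ) t, f s) - f t) ^ q) ^ (1/q) := by
  have hq0 : 0 < q := lt_of_lt_of_le one_pos hq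
  -- measurability of f and of the primitive F
  have hfae : AEMeasurable f (volume.restrict (Ioi 0)) :=
    aemeasurable_restrict_of_antitoneOn measurableSet_Ioi hmono
  have hFcont : ContinuousOn (fun r => ∫ u in Ioc (0:ℝ) r, f u) (Ioi 0) := by
    intro x hx
    have hx0 : (0:ℝ) < x := hx
    have hco : ContinuousOn (fun r => ∫ u in Ioc (0:ℝ) r, f u) (Icc 0 (x+1)) :=
      intervalIntegral.continuousOn_primitive
        ((integrableOn_Icc_iff_integrableOn_Ioc).2 (hloc (x+1) (by linarith)))
    have hmem : Icc (0:ℝ) (x+1) ∈ nhdsWithin x (Ioi 0) :=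
      mem_nhdsWithin_of_mem_nhds (Icc_mem_nhds hx0 (lt_add_one x))
    exact (hco.continuousWithinAt ⟨hx0.le, by linarith⟩).mono_of_mem_nhdsWithin hmem
  have hFae : AEMeasurable (fun r => ∫ u in Ioc (0:ℝ) r, f u) (volume.restrict (Ioi 0)) :=
    hFcont.aemeasurable measurableSet_Ioi
  have hGae : AEMeasurable
      (fun s => ENNReal.ofReal ((1/s) * (∫ u in Ioc (0:ℝ) s, f u) - f s))
      (volume.restrict (Ioi 0)) :=
    ((((measurable_const.div measurable_id).aemeasurable.mul hFae)).sub hfae).ennreal_ofReal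
  have key : ∫⁻ t in Ioi (0:ℝ), ENNReal.ofReal ((1/t) * ∫ s in Ioc (0:ℝ) t, f s) ^ q
      ≤ ENNReal.ofReal q ^ q *
        ∫⁻ t in Ioi (0:ℝ),
          ENNReal.ofReal ((1/t) * (∫ s in Ioc (0:ℝ) t, f s) - f t) ^ q := by
    refine le_trans ?_ (hardy _ hGae hq)
    refine lintegral_mono_ae ?_
    filter_upwards [ae_restrict_mem measurableSet_Ioi] with t ht
    exact ENNReal.rpow_le_rpow (rep f hf0 hmono hloc hlim hfae ht) hq0.le
  calc (∫⁻ t in Ioi (0:ℝ),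
        ENNReal.ofReal ((1/t) * ∫ s in Ioc (0:ℝ) t, f s) ^ q) ^ (1/q)
      ≤ (ENNReal.ofReal q ^ q *
          ∫⁻ t in Ioi (0:ℝ),
            ENNReal.ofReal ((1/t) * (∫ s in Ioc (0:ℝ) t, f s) - f t) ^ q) ^ (1/q) :=
        ENNReal.rpow_le_rpow key (by positivity)
    _ = ENNReal.ofReal q *
        (∫⁻ t in Ioi (0:ℝ),
          ENNReal.ofReal ((1/t) * (∫ s in Ioc (0:ℝ) t, f s) - f t) ^ q) ^ (1/q) := by
        rw [ENNReal.mul_rpow_of_nonneg _ _ (by positivity), ← ENNReal.rpow_mul,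
          mul_one_div_cancel hq0.ne', ENNReal.rpow_one]
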